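/- Suppose σ > t/√(2π), t > 0, Δ ≥ 0. Then the trade-off function between the lattice discrete Gaussians N_{tℤ}(0, σ²) and N_{tℤ}(Δ, σ²) (with Δ ∈ tℤ) satisfies T(N_{tℤ}(0,σ²), N_{tℤ}(Δ,σ²))(α) ≥ G_{(Δ+2t)/σ}(α) for all α ∈ (0,1), where G_μ(α) = Φ(Φ⁻¹(1−α) − μ). -/

import Mathlib

open MeasureTheory ProbabilityTheory Real

/-- The discrete Gaussian measure on the lattice `tℤ` centered at `c` with variance
parameter `v`, assigning to `t·z` a mass proportional to `exp(−(t z − c)²/(2v))`. -/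
noncomputable def latticeGauss (t v c : ℝ) : Measure ℝ :=
  Measure.sum fun z : ℤ =>
    (ENNReal.ofReal (Real.exp (-(t * (z : ℝ) - c) ^ 2 / (2 * v)) /
        ∑' y : ℤ, Real.exp (-(t * (y : ℝ) - c) ^ 2 / (2 * v)))) • Measure.dirac (t * (z : ℝ))

/-- Trade-off function `T(P,Q)(α)`: the minimal type II error over measurable
randomized tests with type I error at most `α`. -/
noncomputable def tradeOff (P Q : Measure ℝ) (α : ℝ) : ℝ :=
  sInf {β : ℝ | ∃ φ : ℝ → ℝ, Measurable φ ∧ (∀ x, φ x ∈ Set.Icc (0 : ℝ) 1) ∧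
    ∫ x, φ x ∂P ≤ α ∧ β = 1 - ∫ x, φ x ∂Q}

/-- Standard normal CDF. -/
noncomputable def Phi (x : ℝ) : ℝ := ((gaussianReal 0 1) (Set.Iic x)).toReal

/-- Inverse of the standard normal CDF. -/
noncomputable def PhiInv (q : ℝ) : ℝ := sInf {x : ℝ | q ≤ Phi x}

/-- The Gaussian trade-off function `G_μ(α) = Φ(Φ⁻¹(1−α) − μ)`. -/
noncomputable def Gmu (m α : ℝ) : ℝ := Phi (PhiInv (1 - α) - m)

open Set


namespace LatticeAux

lemma summable_exp_quadratic (a b d : ℝ) (ha : 0 < a) :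
    Summable fun n : ℕ => Real.exp (-a * n ^ 2 + b * n + d) := by
  refine Summable.of_nonneg_of_le (fun n => (Real.exp_pos _).le) (fun n => ?_)
    ((summable_geometric_of_lt_one (Real.exp_pos _).le
      (Real.exp_lt_one_iff.2 (by norm_num : (-1:ℝ) < 0))).mul_left
      (Real.exp ((b + 1) ^ 2 / (4 * a) + d)))
  rw [← Real.exp_nat_mul, ← Real.exp_add]
  apply Real.exp_le_exp.2
  have h4a : (0:ℝ) < 4 * a := by linarith
  have key : -a * (n:ℝ) ^ 2 + b * n ≤ (b + 1) ^ 2 / (4 * a) + (-1) * n := by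
    rw [div_add' _ _ _ h4a.ne', le_div_iff₀ h4a]
    nlinarith [sq_nonneg (2 * a * (n:ℝ) - (b + 1))]
  linarith

lemma summable_w {t v : ℝ} (c : ℝ) (ht : 0 < t) (hv : 0 < v) :
    Summable fun z : ℤ => Real.exp (-(t * (z : ℝ) - c) ^ 2 / (2 * v)) := by
  apply Summable.of_nat_of_neg_add_one
  · apply (summable_exp_quadratic (t ^ 2 / (2 * v)) (t * c / v) (-c ^ 2 / (2 * v))
      (by positivity)).congr
    intro n
    congr 1
    push_cast
    field_simp
    ring
  · apply (summable_exp_quadratic (t ^ 2 / (2 * v)) (-(t ^ 2 + t * c) / v)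
      (-(t + c) ^ 2 / (2 * v)) (by positivity)).congr
    intro n
    congr 1
    push_cast
    field_simp
    ring

end LatticeAux

namespace LatticeAux

lemma correlation {a b : ℤ → ℝ} (ha : ∀ z, 0 ≤ a z) (hb : ∀ z, 0 ≤ b z)
    (hsa : Summable a) (hsb : Summable b) (A : Set ℤ)
    (h : ∀ z ∈ A, ∀ z' ∉ A, a z * b z' ≤ b z * a z') :
    (∑' z, A.indicator a z) * ∑' z, b z ≤ (∑' z, A.indicator b z) * ∑' z, a z := by
  have hsaA : Summable (A.indicator a) := hsa.indicator A
  have hsbA : Summable (A.indicator b) := hsb.indicator A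
  have hsaC : Summable (Aᶜ.indicator a) := hsa.indicator Aᶜ
  have hsbC : Summable (Aᶜ.indicator b) := hsb.indicator Aᶜ
  have hb_split : ∑' z, b z = (∑' z, A.indicator b z) + ∑' z, Aᶜ.indicator b z := by
    rw [← Summable.tsum_add hsbA hsbC]
    exact tsum_congr fun z => (Set.indicator_self_add_compl_apply A b z).symm
  have ha_split : ∑' z, a z = (∑' z, A.indicator a z) + ∑' z, Aᶜ.indicator a z := by
    rw [← Summable.tsum_add hsaA hsaC]
    exact tsum_congr fun z => (Set.indicator_self_add_compl_apply A a z).symm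
  have key : (∑' z, A.indicator a z) * (∑' z, Aᶜ.indicator b z) ≤
      (∑' z, A.indicator b z) * (∑' z, Aᶜ.indicator a z) := by
    rw [← tsum_mul_right, ← tsum_mul_right]
    refine Summable.tsum_le_tsum (fun z => ?_) (hsaA.mul_right _) (hsbA.mul_right _)
    by_cases hz : z ∈ A
    · simp only [Set.indicator_of_mem hz]
      rw [← tsum_mul_left, ← tsum_mul_left]
      refine Summable.tsum_le_tsum (fun z' => ?_) (hsbC.mul_left _) (hsaC.mul_left _)
      by_cases hz' : z' ∈ A
      · simp [Set.indicator_of_notMem (by simpa using hz' : z' ∉ Aᶜ)]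
      · simp only [Set.indicator_of_mem (by simpa using hz' : z' ∈ Aᶜ)]
        exact h z hz z' hz'
    · simp only [Set.indicator_of_notMem hz, zero_mul, le_refl]
  have h1 : 0 ≤ ∑' z, A.indicator a z := tsum_nonneg fun z => Set.indicator_nonneg (fun i _ => ha i) z
  have h2 : 0 ≤ ∑' z, A.indicator b z := tsum_nonneg fun z => Set.indicator_nonneg (fun i _ => hb i) z
  calc (∑' z, A.indicator a z) * ∑' z, b z
      = (∑' z, A.indicator a z) * (∑' z, A.indicator b z)
        + (∑' z, A.indicator a z) * (∑' z, Aᶜ.indicator b z) := by rw [hb_split]; ring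
    _ ≤ (∑' z, A.indicator b z) * (∑' z, A.indicator a z)
        + (∑' z, A.indicator b z) * (∑' z, Aᶜ.indicator a z) := by
        refine add_le_add (le_of_eq (mul_comm _ _)) key
    _ = (∑' z, A.indicator b z) * ∑' z, a z := by rw [ha_split]; ring

lemma iUnion_cells {t : ℝ} (ht : 0 < t) :
    (⋃ z : ℤ, Ioc (t * (z:ℝ) - t) (t * (z:ℝ))) = univ := by
  ext x
  simp only [mem_iUnion, mem_Ioc, mem_univ, iff_true]
  refine ⟨⌈x / t⌉, ?_, ?_⟩
  · have := Int.ceil_lt_add_one (x / t)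
    have h2 : t * (⌈x / t⌉ : ℝ) < t * (x / t + 1) := by
      exact (mul_lt_mul_iff_right₀ ht).2 this
    rw [mul_add, mul_one, mul_div_cancel₀ _ ht.ne'] at h2
    linarith
  · have := Int.le_ceil (x / t)
    have h2 : t * (x / t) ≤ t * (⌈x / t⌉ : ℝ) := (mul_le_mul_iff_right₀ ht).2 this
    rwa [mul_div_cancel₀ _ ht.ne'] at h2

lemma disjoint_cells {t : ℝ} (ht : 0 < t) :
    Pairwise (Function.onFun Disjoint fun z : ℤ => Ioc (t * (z:ℝ) - t) (t * (z:ℝ))) := by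
  intro z z' hzz'
  simp only [Function.onFun]
  rw [Set.Ioc_disjoint_Ioc]
  rcases lt_or_gt_of_ne hzz' with h | h
  · have h1 : (z:ℝ) + 1 ≤ (z':ℝ) := by exact_mod_cast h
    have h2 := (mul_le_mul_iff_right₀ ht).2 h1
    exact le_trans (min_le_left _ _) (le_trans (by nlinarith) (le_max_right _ _))
  · have h1 : (z':ℝ) + 1 ≤ (z:ℝ) := by exact_mod_cast h
    have h2 := (mul_le_mul_iff_right₀ ht).2 h1
    exact le_trans (min_le_right _ _) (le_trans (by nlinarith) (le_max_left _ _))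

lemma hasSum_cells {t : ℝ} (ht : 0 < t) {f : ℝ → ℝ} (hf : Integrable f) :
    HasSum (fun z : ℤ => ∫ x in Ioc (t * (z:ℝ) - t) (t * (z:ℝ)), f x) (∫ x, f x) := by
  have := MeasureTheory.hasSum_integral_iUnion (μ := volume) (f := f)
    (s := fun z : ℤ => Ioc (t * (z:ℝ) - t) (t * (z:ℝ)))
    (fun z => measurableSet_Ioc) (disjoint_cells ht) ?_
  · rwa [iUnion_cells ht, setIntegral_univ] at this
  · rw [iUnion_cells ht]
    exact hf.integrableOn

end LatticeAux

namespace LatticeAux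

noncomputable def w (σ x : ℝ) : ℝ := Real.exp (-x ^ 2 / (2 * σ ^ 2))

lemma w_pos (σ x : ℝ) : 0 < w σ x := Real.exp_pos _

lemma w_nonneg (σ x : ℝ) : 0 ≤ w σ x := (w_pos σ x).le

lemma w_eq (σ : ℝ) : w σ = fun x => Real.exp (-(1 / (2 * σ ^ 2)) * x ^ 2) := by
  funext x; unfold w; congr 1; field_simp

lemma continuous_w (σ : ℝ) : Continuous (w σ) := by
  rw [w_eq]; fun_prop

lemma integrable_w {σ : ℝ} (hσ : 0 < σ) : Integrable (w σ) := by
  rw [w_eq]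
  exact integrable_exp_neg_mul_sq (by positivity)

lemma summable_wz {t σ : ℝ} (ht : 0 < t) (hσ : 0 < σ) :
    Summable fun z : ℤ => w σ (t * (z : ℝ)) := by
  have := summable_w (t := t) (v := σ ^ 2) 0 ht (by positivity)
  apply this.congr
  intro z; unfold w; rw [sub_zero]

lemma w_mul_le {σ : ℝ} (hσ : 0 < σ) {p q x : ℝ} (hd : 0 ≤ p - q) (hx : x ≤ q) :
    w σ p * w σ x ≤ w σ (x + (p - q)) * w σ q := by
  unfold w
  rw [← Real.exp_add, ← Real.exp_add]
  apply Real.exp_le_exp.2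
  have h2σ : (0:ℝ) < 2 * σ ^ 2 := by positivity
  rw [← add_div, ← add_div, div_le_div_iff₀ h2σ h2σ]
  nlinarith [mul_nonneg hd (by linarith : (0:ℝ) ≤ q - x), h2σ]

lemma tail_sum_le {t σ : ℝ} (ht : 0 < t) (hσ : 0 < σ) (y : ℝ) (A : Set ℤ)
    (hA : ∀ z ∈ A, y ≤ t * z) (hA2 : ∀ z ∈ A, ∀ z' ∉ A, z' ≤ z) :
    (∑' z : ℤ, A.indicator (fun z : ℤ => w σ (t * z)) z) * (∫ x, w σ x) ≤
      (∫ x in Ioi (y - t), w σ x) * ∑' z : ℤ, w σ (t * (z : ℝ)) := by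
  set a : ℤ → ℝ := fun z => w σ (t * z) with ha_def
  set b : ℤ → ℝ := fun z => ∫ x in Ioc (t * (z:ℝ) - t) (t * z), w σ x with hb_def
  have hb_sum : HasSum b (∫ x, w σ x) := hasSum_cells ht (integrable_w hσ)
  have hb_nonneg : ∀ z, 0 ≤ b z := fun z =>
    setIntegral_nonneg measurableSet_Ioc fun x _ => w_nonneg σ x
  have hab : ∀ z ∈ A, ∀ z' ∉ A, a z * b z' ≤ b z * a z' := by
    intro z hz z' hz'
    have hzz' : z' ≤ z := hA2 z hz z' hz'
    have hzz'R : (z':ℝ) ≤ z := by exact_mod_cast hzz'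
    have hd : 0 ≤ t * z - t * z' := by nlinarith
    have hle : t * (z':ℝ) - t ≤ t * z' := by linarith
    have hle2 : t * (z:ℝ) - t ≤ t * z := by linarith
    calc a z * b z'
        = ∫ x in (t * (z':ℝ) - t)..(t * z'), a z * w σ x := by
          rw [intervalIntegral.integral_of_le hle, ← integral_const_mul]
      _ ≤ ∫ x in (t * (z':ℝ) - t)..(t * z'), w σ (x + (t * z - t * z')) * a z' := by
          apply intervalIntegral.integral_mono_on hle
          · exact (Continuous.intervalIntegrable (continuous_const.mul (continuous_w σ)) _ _)
          · exact (Continuous.intervalIntegrable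
              (((continuous_w σ).comp (continuous_id.add continuous_const)).mul
                continuous_const) _ _)
          · intro x hx
            exact w_mul_le hσ hd hx.2
      _ = (∫ x in (t * (z':ℝ) - t)..(t * z'), w σ (x + (t * z - t * z'))) * a z' := by
          rw [← intervalIntegral.integral_mul_const]
      _ = b z * a z' := by
          rw [intervalIntegral.integral_comp_add_right (fun u => w σ u) (t * z - t * z'),
            show t * (z':ℝ) - t + (t * z - t * z') = t * (z:ℝ) - t by ring,
            show t * (z':ℝ) + (t * (z:ℝ) - t * z') = t * (z:ℝ) by ring,
            intervalIntegral.integral_of_le hle2]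
  have corr := correlation (fun z => w_nonneg σ _) hb_nonneg (summable_wz ht hσ)
    hb_sum.summable A hab
  rw [hb_sum.tsum_eq] at corr
  refine corr.trans ?_
  apply mul_le_mul_of_nonneg_right _ (tsum_nonneg fun z => w_nonneg σ _)
  -- ∑' z, A.indicator b z ≤ ∫ x in Ioi (y - t), w σ x
  have hsub : HasSum (fun z : A => b z)
      (∫ x in ⋃ z : A, Ioc (t * ((z:ℤ):ℝ) - t) (t * ((z:ℤ):ℝ)), w σ x) := by
    refine MeasureTheory.hasSum_integral_iUnion (fun z => measurableSet_Ioc)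
      (fun i j hij => disjoint_cells ht (Subtype.val_injective.ne hij)) ?_
    exact (integrable_w hσ).integrableOn
  have hUsub : (⋃ z : A, Ioc (t * ((z:ℤ):ℝ) - t) (t * ((z:ℤ):ℝ))) ⊆ Ioi (y - t) := by
    rintro x hx
    simp only [mem_iUnion, mem_Ioc] at hx
    obtain ⟨⟨z, hz⟩, h1, h2⟩ := hx
    have := hA z hz
    simp only [mem_Ioi]
    linarith
  calc ∑' z, A.indicator b z = ∑' z : A, b z := (tsum_subtype A b).symm
    _ = ∫ x in ⋃ z : A, Ioc (t * ((z:ℤ):ℝ) - t) (t * ((z:ℤ):ℝ)), w σ x := hsub.tsum_eq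
    _ ≤ ∫ x in Ioi (y - t), w σ x := by
        apply setIntegral_mono_set ((integrable_w hσ).integrableOn)
        · exact Filter.Eventually.of_forall fun x => w_nonneg σ x
        · exact Filter.Eventually.of_forall hUsub

end LatticeAux

namespace LatticeAux

lemma sqrt_two_pi_pos : (0:ℝ) < Real.sqrt (2 * π) :=
  Real.sqrt_pos.2 (by positivity)

lemma total_w1 : ∫ x, w 1 x = Real.sqrt (2 * π) := by
  rw [w_eq]
  have : ∀ x : ℝ, Real.exp (-(1 / (2 * (1:ℝ) ^ 2)) * x ^ 2)
      = Real.exp (-(1/2) * x ^ 2) := by intro x; norm_num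
  rw [show (fun x => Real.exp (-(1 / (2 * (1:ℝ) ^ 2)) * x ^ 2))
      = fun x => Real.exp (-(1/2 : ℝ) * x ^ 2) from funext this]
  rw [integral_gaussian]
  rw [show π / (1/2 : ℝ) = 2 * π by ring]

lemma total_w {σ : ℝ} (hσ : 0 < σ) : ∫ x, w σ x = σ * Real.sqrt (2 * π) := by
  rw [w_eq, integral_gaussian]
  rw [show π / (1 / (2 * σ ^ 2)) = σ ^ 2 * (2 * π) by field_simp]
  rw [Real.sqrt_mul (sq_nonneg σ), Real.sqrt_sq hσ.le]

lemma Iic_add_Ioi_w {σ : ℝ} (hσ : 0 < σ) (c : ℝ) :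
    (∫ x in Iic c, w σ x) + ∫ x in Ioi c, w σ x = ∫ x, w σ x := by
  have := MeasureTheory.integral_add_compl (measurableSet_Iic (a := c))
    (integrable_w hσ) (μ := volume)
  rwa [compl_Iic] at this

lemma reflect_w (σ c : ℝ) : ∫ x in Ioi c, w σ x = ∫ x in Iic (-c), w σ x := by
  rw [← integral_comp_neg_Ioi]
  congr 1
  funext x
  unfold w
  rw [neg_sq]

lemma scale_tail {σ : ℝ} (hσ : 0 < σ) (y : ℝ) :
    ∫ x in Ioi y, w σ x = σ * ∫ u in Ioi (y / σ), w 1 u := by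
  have h1 : ∀ x : ℝ, w σ x = w 1 (σ⁻¹ * x) := by
    intro x; unfold w
    congr 1
    rw [one_pow, mul_one, mul_pow]
    rw [div_eq_div_iff (by positivity) (by positivity)]
    field_simp
  rw [show (∫ x in Ioi y, w σ x) = ∫ x in Ioi y, w 1 (σ⁻¹ * x) by
    exact setIntegral_congr_fun measurableSet_Ioi fun x _ => h1 x]
  rw [integral_comp_mul_left_Ioi (w 1) y (inv_pos.2 hσ)]
  rw [inv_inv, smul_eq_mul]
  congr 2
  field_simp

lemma Phi_eq (x : ℝ) : Phi x = (∫ u in Iic x, w 1 u) / Real.sqrt (2 * π) := by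
  unfold Phi
  rw [gaussianReal_apply_eq_integral 0 one_ne_zero (Iic x)]
  rw [ENNReal.toReal_ofReal (setIntegral_nonneg measurableSet_Iic
    fun u _ => gaussianPDFReal_nonneg 0 1 u)]
  rw [show (fun u => gaussianPDFReal 0 1 u)
      = fun u => (Real.sqrt (2 * π))⁻¹ * w 1 u from funext fun u => by
    unfold gaussianPDFReal w
    push_cast
    norm_num]
  rw [MeasureTheory.integral_const_mul]
  rw [inv_mul_eq_div]

lemma Phi_strictMono : StrictMono Phi := by
  intro a b hab
  have hsub : Phi b - Phi a = (∫ u in a..b, w 1 u) / Real.sqrt (2 * π) := by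
    rw [Phi_eq, Phi_eq, div_sub_div_same,
      intervalIntegral.integral_Iic_sub_Iic ((integrable_w (σ := 1) one_pos).integrableOn)
        ((integrable_w (σ := 1) one_pos).integrableOn)]
  have hpos : 0 < (∫ u in a..b, w 1 u) :=
    intervalIntegral.intervalIntegral_pos_of_pos
      (Continuous.intervalIntegrable (continuous_w 1) a b)
      (fun x => w_pos 1 x) hab
  have h2 := div_pos hpos sqrt_two_pi_pos
  linarith [hsub, h2]

lemma Phi_continuous : Continuous Phi := by
  have : Phi = fun x => ((∫ u in Iic (0:ℝ), w 1 u) + ∫ u in (0:ℝ)..x, w 1 u)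
      / Real.sqrt (2 * π) := by
    funext x
    rw [Phi_eq]
    congr 1
    rw [← intervalIntegral.integral_Iic_sub_Iic ((integrable_w (σ := 1) one_pos).integrableOn)
      ((integrable_w (σ := 1) one_pos).integrableOn)]
    ring
  rw [this]
  exact ((continuous_const.add ((integrable_w one_pos).continuous_primitive 0)).div_const _)

lemma Phi_add_Phi_neg (x : ℝ) : Phi x + Phi (-x) = 1 := by
  rw [Phi_eq, Phi_eq, ← add_div]
  rw [show (∫ u in Iic (-x), w 1 u) = ∫ u in Ioi x, w 1 u from (reflect_w 1 x).symm]
  rw [Iic_add_Ioi_w one_pos, total_w1, div_self sqrt_two_pi_pos.ne']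

lemma Phi_pos (x : ℝ) : 0 < Phi x := by
  rw [Phi_eq]
  apply div_pos _ sqrt_two_pi_pos
  have h2 : (∫ u in Iic x, w 1 u) - ∫ u in Iic (x - 1), w 1 u = ∫ u in (x-1)..x, w 1 u :=
    intervalIntegral.integral_Iic_sub_Iic ((integrable_w (σ := 1) one_pos).integrableOn)
      ((integrable_w (σ := 1) one_pos).integrableOn)
  have h3 : 0 < ∫ u in (x-1)..x, w 1 u :=
    intervalIntegral.intervalIntegral_pos_of_pos
      (Continuous.intervalIntegrable (continuous_w 1) _ _) (fun u => w_pos 1 u) (by linarith)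
  have h4 : 0 ≤ ∫ u in Iic (x - 1), w 1 u :=
    setIntegral_nonneg measurableSet_Iic fun u _ => w_nonneg 1 u
  linarith

lemma Phi_lt_one (x : ℝ) : Phi x < 1 := by
  have := Phi_add_Phi_neg x
  have := Phi_pos (-x)
  linarith

lemma Phi_upper (x : ℝ) : Phi x ≤ Real.exp (x + 1/2) / Real.sqrt (2 * π) := by
  rw [Phi_eq]
  apply div_le_div_of_nonneg_right ?_ sqrt_two_pi_pos.le |>.trans_eq rfl
  have hpt : ∀ u : ℝ, w 1 u ≤ Real.exp (1/2) * Real.exp u := by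
    intro u
    rw [← Real.exp_add]
    apply Real.exp_le_exp.2
    rw [one_pow, mul_one]
    nlinarith [sq_nonneg (u + 1)]
  calc (∫ u in Iic x, w 1 u) ≤ ∫ u in Iic x, Real.exp (1/2) * Real.exp u := by
        apply setIntegral_mono_on ((integrable_w (σ := 1) one_pos).integrableOn)
          ((integrableOn_exp_Iic x).const_mul _) measurableSet_Iic
        exact fun u _ => hpt u
    _ = Real.exp (1/2) * Real.exp x := by
        rw [MeasureTheory.integral_const_mul, integral_exp_Iic]
    _ = Real.exp (x + 1/2) := by rw [← Real.exp_add]; ring_nf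

lemma exists_Phi_lt {p : ℝ} (hp : 0 < p) : ∃ a : ℝ, Phi a < p := by
  refine ⟨Real.log (p * Real.sqrt (2 * π)) - 1, lt_of_le_of_lt (Phi_upper _) ?_⟩
  rw [div_lt_iff₀ sqrt_two_pi_pos]
  calc Real.exp (Real.log (p * Real.sqrt (2 * π)) - 1 + 1/2)
      < Real.exp (Real.log (p * Real.sqrt (2 * π))) := by
        apply Real.exp_lt_exp.2; linarith
    _ = p * Real.sqrt (2 * π) := Real.exp_log (by positivity)

lemma exists_Phi_gt {p : ℝ} (hp : p < 1) : ∃ b : ℝ, p < Phi b := by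
  obtain ⟨a, ha⟩ := exists_Phi_lt (p := 1 - p) (by linarith)
  refine ⟨-a, ?_⟩
  have := Phi_add_Phi_neg a
  linarith

lemma Phi_surj {p : ℝ} (hp0 : 0 < p) (hp1 : p < 1) : ∃ x, Phi x = p := by
  obtain ⟨a, ha⟩ := exists_Phi_lt hp0
  obtain ⟨b, hb⟩ := exists_Phi_gt hp1
  have hab : a ≤ b := by
    by_contra hcon
    push_neg at hcon
    exact absurd (Phi_strictMono hcon) (by linarith)
  obtain ⟨x, _, hx⟩ := intermediate_value_Icc hab Phi_continuous.continuousOn ⟨ha.le, hb.le⟩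
  exact ⟨x, hx⟩

lemma Phi_PhiInv {p : ℝ} (hp0 : 0 < p) (hp1 : p < 1) : Phi (PhiInv p) = p := by
  obtain ⟨x, hx⟩ := Phi_surj hp0 hp1
  have hset : {y : ℝ | p ≤ Phi y} = Ici x := by
    ext y
    simp only [mem_setOf_eq, mem_Ici]
    rw [← hx]
    exact ⟨fun h => (Phi_strictMono.le_iff_le).1 h, fun h => Phi_strictMono.monotone h⟩
  unfold PhiInv
  rw [hset, csInf_Ici, hx]

lemma exp_diff_eq {σ : ℝ} (hσ : 0 < σ) (s ystar u : ℝ) :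
    (s * ystar / σ ^ 2 - s ^ 2 / (2 * σ ^ 2) + -u ^ 2 / (2 * σ ^ 2))
      - (-(u - s) ^ 2 / (2 * σ ^ 2)) = s * (ystar - u) / σ ^ 2 := by
  field_simp
  ring

lemma w_shift_le {σ : ℝ} (hσ : 0 < σ) {s ystar u : ℝ} (hs : 0 ≤ s) (h : u ≤ ystar) :
    w σ (u - s) ≤ Real.exp (s * ystar / σ ^ 2 - s ^ 2 / (2 * σ ^ 2)) * w σ u := by
  unfold w
  rw [← Real.exp_add]
  apply Real.exp_le_exp.2
  have := exp_diff_eq hσ s ystar u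
  have hnn : 0 ≤ s * (ystar - u) / σ ^ 2 :=
    div_nonneg (mul_nonneg hs (by linarith)) (by positivity)
  linarith

lemma w_shift_ge {σ : ℝ} (hσ : 0 < σ) {s ystar u : ℝ} (hs : 0 ≤ s) (h : ystar ≤ u) :
    Real.exp (s * ystar / σ ^ 2 - s ^ 2 / (2 * σ ^ 2)) * w σ u ≤ w σ (u - s) := by
  unfold w
  rw [← Real.exp_add]
  apply Real.exp_le_exp.2
  have := exp_diff_eq hσ s ystar u
  have hnn : s * (ystar - u) / σ ^ 2 ≤ 0 := by
    apply div_nonpos_of_nonpos_of_nonneg _ (by positivity)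
    exact mul_nonpos_of_nonneg_of_nonpos hs (by linarith)
  linarith

lemma gauss_hockey {σ : ℝ} (hσ : 0 < σ) {s : ℝ} (hs : 0 ≤ s) (ystar y : ℝ) :
    (∫ x in Ioi (y - s), w σ x)
        - Real.exp (s * ystar / σ ^ 2 - s ^ 2 / (2 * σ ^ 2)) * ∫ x in Ioi y, w σ x ≤
      (∫ x in Ioi (ystar - s), w σ x)
        - Real.exp (s * ystar / σ ^ 2 - s ^ 2 / (2 * σ ^ 2)) * ∫ x in Ioi ystar, w σ x := by
  set k := Real.exp (s * ystar / σ ^ 2 - s ^ 2 / (2 * σ ^ 2)) with hk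
  have hIoi : ∀ c : ℝ, (∫ x in Ioi c, w σ x) = (∫ x, w σ x) - ∫ x in Iic c, w σ x := by
    intro c
    have := Iic_add_Ioi_w hσ c
    linarith
  have key : (∫ u in y..ystar, w σ (u - s)) ≤ ∫ u in y..ystar, k * w σ u := by
    rcases le_total y ystar with hyy | hyy
    · apply intervalIntegral.integral_mono_on hyy
      · exact Continuous.intervalIntegrable
          ((continuous_w σ).comp (continuous_id.sub continuous_const)) _ _
      · exact Continuous.intervalIntegrable (continuous_const.mul (continuous_w σ)) _ _
      · exact fun u hu => w_shift_le hσ hs hu.2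
    · rw [intervalIntegral.integral_symm, intervalIntegral.integral_symm ystar y]
      apply neg_le_neg
      apply intervalIntegral.integral_mono_on hyy
      · exact Continuous.intervalIntegrable (continuous_const.mul (continuous_w σ)) _ _
      · exact Continuous.intervalIntegrable
          ((continuous_w σ).comp (continuous_id.sub continuous_const)) _ _
      · exact fun u hu => w_shift_ge hσ hs hu.1
  have hshift : (∫ u in y..ystar, w σ (u - s)) = ∫ u in (y - s)..(ystar - s), w σ u :=
    intervalIntegral.integral_comp_sub_right (fun u => w σ u) s
  have hC1 : (∫ u in Iic (ystar - s), w σ u) - ∫ u in Iic (y - s), w σ u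
      = ∫ u in (y - s)..(ystar - s), w σ u :=
    intervalIntegral.integral_Iic_sub_Iic ((integrable_w hσ).integrableOn)
      ((integrable_w hσ).integrableOn)
  have hC2 : (∫ u in Iic ystar, w σ u) - ∫ u in Iic y, w σ u = ∫ u in y..ystar, w σ u :=
    intervalIntegral.integral_Iic_sub_Iic ((integrable_w hσ).integrableOn)
      ((integrable_w hσ).integrableOn)
  have hk2 : k * ((∫ u in Iic ystar, w σ u) - ∫ u in Iic y, w σ u)
      = ∫ u in y..ystar, k * w σ u := by
    rw [hC2, ← intervalIntegral.integral_const_mul]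
  rw [hIoi (y - s), hIoi y, hIoi (ystar - s), hIoi ystar]
  nlinarith [key, hshift, hC1, hC2, hk2]

lemma tail_w_eq_phi {σ : ℝ} (hσ : 0 < σ) (c : ℝ) :
    ∫ x in Ioi c, w σ x = σ * Real.sqrt (2 * π) * (1 - Phi (c / σ)) := by
  rw [scale_tail hσ, Phi_eq]
  have hAB := Iic_add_Ioi_w one_pos (c / σ)
  rw [total_w1] at hAB
  rw [mul_sub, mul_one, mul_assoc, mul_comm (Real.sqrt (2 * π)) (_ / Real.sqrt (2 * π)),
    div_mul_cancel₀ _ sqrt_two_pi_pos.ne', ← hAB]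
  ring

end LatticeAux

namespace LatticeAux

lemma summable_ratio_mul {t v c : ℝ} (ht : 0 < t) (hv : 0 < v) {φ : ℝ → ℝ}
    (h0 : ∀ x, 0 ≤ φ x) (h1 : ∀ x, φ x ≤ 1) :
    Summable fun z : ℤ => (Real.exp (-(t * (z : ℝ) - c) ^ 2 / (2 * v)) /
        ∑' y : ℤ, Real.exp (-(t * (y : ℝ) - c) ^ 2 / (2 * v))) * φ (t * z) := by
  set S := ∑' y : ℤ, Real.exp (-(t * (y : ℝ) - c) ^ 2 / (2 * v))
  have hS : 0 < S := Summable.tsum_pos (summable_w c ht hv) (fun z => (Real.exp_pos _).le) 0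
    (Real.exp_pos _)
  refine Summable.of_nonneg_of_le
    (fun z => mul_nonneg (div_nonneg (Real.exp_pos _).le hS.le) (h0 _)) (fun z => ?_)
    ((summable_w c ht hv).div_const S)
  calc (Real.exp (-(t * (z : ℝ) - c) ^ 2 / (2 * v)) / S) * φ (t * z)
      ≤ (Real.exp (-(t * (z : ℝ) - c) ^ 2 / (2 * v)) / S) * 1 :=
        mul_le_mul_of_nonneg_left (h1 _) (div_nonneg (Real.exp_pos _).le hS.le)
    _ = _ := mul_one _

lemma latticeGauss_integral (t v c : ℝ) (ht : 0 < t) (hv : 0 < v) {φ : ℝ → ℝ}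
    (hφ : Measurable φ) (h0 : ∀ x, 0 ≤ φ x) (h1 : ∀ x, φ x ≤ 1) :
    ∫ x, φ x ∂(latticeGauss t v c) =
      ∑' z : ℤ, (Real.exp (-(t * (z : ℝ) - c) ^ 2 / (2 * v)) /
        ∑' y : ℤ, Real.exp (-(t * (y : ℝ) - c) ^ 2 / (2 * v))) * φ (t * z) := by
  set S := ∑' y : ℤ, Real.exp (-(t * (y : ℝ) - c) ^ 2 / (2 * v)) with hSdef
  have hS : 0 < S := Summable.tsum_pos (summable_w c ht hv) (fun z => (Real.exp_pos _).le) 0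
    (Real.exp_pos _)
  rw [MeasureTheory.integral_eq_lintegral_of_nonneg_ae (Filter.Eventually.of_forall h0)
    hφ.aestronglyMeasurable]
  unfold latticeGauss
  rw [MeasureTheory.lintegral_sum_measure]
  have hterm : ∀ z : ℤ,
      (∫⁻ x, ENNReal.ofReal (φ x) ∂((ENNReal.ofReal
          (Real.exp (-(t * (z : ℝ) - c) ^ 2 / (2 * v)) / S)) • Measure.dirac (t * (z : ℝ))))
        = ENNReal.ofReal ((Real.exp (-(t * (z : ℝ) - c) ^ 2 / (2 * v)) / S) * φ (t * z)) := by
    intro z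
    rw [MeasureTheory.lintegral_smul_measure, MeasureTheory.lintegral_dirac, smul_eq_mul,
      ← ENNReal.ofReal_mul (div_nonneg (Real.exp_pos _).le hS.le)]
  simp_rw [← hSdef, hterm]
  rw [← ENNReal.ofReal_tsum_of_nonneg
    (fun z => mul_nonneg (div_nonneg (Real.exp_pos _).le hS.le) (h0 _))
    (summable_ratio_mul ht hv h0 h1)]
  exact ENNReal.toReal_ofReal (tsum_nonneg
    fun z => mul_nonneg (div_nonneg (Real.exp_pos _).le hS.le) (h0 _))

end LatticeAux

namespace LatticeAux

lemma log_exp_diff {σ Δ k : ℝ} (hσ : 0 < σ) (hΔ : 0 < Δ) (hk : 0 < k) (u : ℝ) :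
    (Real.log k + -u ^ 2 / (2 * σ ^ 2)) - (-(u - Δ) ^ 2 / (2 * σ ^ 2))
      = Δ * ((σ ^ 2 * Real.log k / Δ + Δ / 2) - u) / σ ^ 2 := by
  field_simp
  ring

lemma threshold_le {σ Δ k : ℝ} (hσ : 0 < σ) (hΔ : 0 < Δ) (hk : 0 < k) {u : ℝ}
    (h : u ≤ σ ^ 2 * Real.log k / Δ + Δ / 2) : w σ (u - Δ) ≤ k * w σ u := by
  unfold w
  rw [show k = Real.exp (Real.log k) from (Real.exp_log hk).symm, ← Real.exp_add]
  apply Real.exp_le_exp.2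
  have heq := log_exp_diff hσ hΔ hk u
  have hnn : 0 ≤ Δ * ((σ ^ 2 * Real.log k / Δ + Δ / 2) - u) / σ ^ 2 :=
    div_nonneg (mul_nonneg hΔ.le (by linarith)) (by positivity)
  linarith

lemma threshold_ge {σ Δ k : ℝ} (hσ : 0 < σ) (hΔ : 0 < Δ) (hk : 0 < k) {u : ℝ}
    (h : σ ^ 2 * Real.log k / Δ + Δ / 2 ≤ u) : k * w σ u ≤ w σ (u - Δ) := by
  unfold w
  rw [show k = Real.exp (Real.log k) from (Real.exp_log hk).symm, ← Real.exp_add]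
  apply Real.exp_le_exp.2
  have heq := log_exp_diff hσ hΔ hk u
  have hnp : Δ * ((σ ^ 2 * Real.log k / Δ + Δ / 2) - u) / σ ^ 2 ≤ 0 := by
    apply div_nonpos_of_nonpos_of_nonneg _ (by positivity)
    exact mul_nonpos_of_nonneg_of_nonpos hΔ.le (by linarith)
  linarith

lemma w_even (σ x : ℝ) : w σ (-x) = w σ x := by unfold w; rw [neg_sq]

lemma tail_sum_ge {t σ : ℝ} (ht : 0 < t) (hσ : 0 < σ) (y : ℝ) :
    (∫ x in Ioi (y + t), w σ x) * (∑' z : ℤ, w σ (t * (z : ℝ))) ≤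
      (∑' z : ℤ, Set.indicator {z : ℤ | y < t * z} (fun z : ℤ => w σ (t * z)) z)
        * ∫ x, w σ x := by
  set a : ℤ → ℝ := fun z => w σ (t * z) with ha_def
  set A : Set ℤ := {z : ℤ | y < t * z} with hA_def
  set C : Set ℤ := {z : ℤ | t * z < -y} with hC_def
  have hsum_a : Summable a := summable_wz ht hσ
  have h1 : ∑' z, A.indicator a z = ∑' z, C.indicator a z := by
    rw [← Equiv.tsum_eq (Equiv.neg ℤ) (A.indicator a)]
    apply tsum_congr
    intro z
    have hmem : (Equiv.neg ℤ z) ∈ A ↔ z ∈ C := by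
      simp only [hA_def, hC_def, Equiv.neg_apply, mem_setOf_eq, Int.cast_neg]
      constructor <;> intro h <;> linarith
    have hval : a (Equiv.neg ℤ z) = a z := by
      simp only [ha_def, Equiv.neg_apply, Int.cast_neg, mul_neg]
      exact w_even σ _
    by_cases hz : z ∈ C
    · rw [Set.indicator_of_mem (hmem.2 hz), Set.indicator_of_mem hz, hval]
    · rw [Set.indicator_of_notMem (fun hc => hz (hmem.1 hc)), Set.indicator_of_notMem hz]
  have h2 : ∑' z, C.indicator a z = (∑' z, a z) - ∑' z, Cᶜ.indicator a z := by
    have := Summable.tsum_add (hsum_a.indicator C) (hsum_a.indicator Cᶜ)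
    have heq : ∑' z, (C.indicator a z + Cᶜ.indicator a z) = ∑' z, a z :=
      tsum_congr fun z => Set.indicator_self_add_compl_apply C a z
    rw [heq] at this
    linarith
  have h3 : (∑' z, Cᶜ.indicator a z) * (∫ x, w σ x) ≤
      (∫ x in Ioi (-y - t), w σ x) * ∑' z, a z := by
    apply tail_sum_le ht hσ (-y) Cᶜ
    · intro z hz
      simp only [hC_def, mem_compl_iff, mem_setOf_eq, not_lt] at hz
      exact hz
    · intro z hz z' hz'
      simp only [hC_def, mem_compl_iff, mem_setOf_eq, not_lt, not_le] at hz hz'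
      have : t * (z' : ℝ) < t * (z : ℝ) := by linarith
      exact_mod_cast le_of_lt ((mul_lt_mul_iff_right₀ ht).1 this)
  have h4 : (∫ x in Ioi (-y - t), w σ x) = (∫ x, w σ x) - ∫ x in Ioi (y + t), w σ x := by
    have hr : (∫ x in Ioi (-y - t), w σ x) = ∫ x in Iic (y + t), w σ x := by
      rw [reflect_w]
      congr 1
      ring
    rw [hr]
    have := Iic_add_Ioi_w hσ (y + t)
    linarith
  rw [h1, h2]
  rw [h4] at h3
  nlinarith [h3]

end LatticeAux

namespace LatticeAux

set_option maxHeartbeats 2000000 in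
lemma main_bound {t σ Δ α : ℝ} (ht : 0 < t) (hσ : 0 < σ) (hΔ : 0 < Δ) {z₀ : ℤ}
    (hz₀ : Δ = t * (z₀ : ℝ)) (hα : α ∈ Set.Ioo (0 : ℝ) 1) {φ : ℝ → ℝ} (hφ : Measurable φ)
    (h0 : ∀ x, 0 ≤ φ x) (h1 : ∀ x, φ x ≤ 1)
    (hP : ∫ x, φ x ∂(latticeGauss t (σ ^ 2) 0) ≤ α) :
    Gmu ((Δ + 2 * t) / σ) α ≤ 1 - ∫ x, φ x ∂(latticeGauss t (σ ^ 2) Δ) := by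
  obtain ⟨hα0, hα1⟩ := hα
  set s : ℝ := Δ + 2 * t with hs_def
  have hs : 0 < s := by linarith
  set xstar : ℝ := PhiInv (1 - α) with hxstar_def
  set ystar : ℝ := σ * xstar with hystar_def
  set k : ℝ := Real.exp (s * ystar / σ ^ 2 - s ^ 2 / (2 * σ ^ 2)) with hk_def
  have hk : 0 < k := Real.exp_pos _
  set cthr : ℝ := σ ^ 2 * Real.log k / Δ + Δ / 2 with hcthr_def
  set a : ℤ → ℝ := fun z => w σ (t * z) with ha_def
  set S : ℝ := ∑' z : ℤ, a z with hS_def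
  have hsum_a : Summable a := summable_wz ht hσ
  have hS : 0 < S := Summable.tsum_pos hsum_a (fun z => w_nonneg σ _) 0 (w_pos σ _)
  set I : ℝ := ∫ x, w σ x with hI_def
  have hI : 0 < I := by rw [hI_def, total_w hσ]; positivity
  have hPhiX : Phi xstar = 1 - α := Phi_PhiInv (by linarith) (by linarith)
  -- rewrite the integrals as sums
  have hw0 : ∀ z : ℤ, Real.exp (-(t * (z : ℝ) - 0) ^ 2 / (2 * σ ^ 2)) = a z := by
    intro z; rw [sub_zero]; rfl
  have hwΔ : ∀ z : ℤ, Real.exp (-(t * (z : ℝ) - Δ) ^ 2 / (2 * σ ^ 2)) = a (z - z₀) := by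
    intro z
    simp only [ha_def]
    unfold w
    congr 2
    push_cast
    rw [hz₀]
    ring
  have hSΔ : (∑' z : ℤ, Real.exp (-(t * (z : ℝ) - Δ) ^ 2 / (2 * σ ^ 2))) = S := by
    rw [tsum_congr hwΔ]
    exact Equiv.tsum_eq (Equiv.subRight z₀) a
  have hS0 : (∑' z : ℤ, Real.exp (-(t * (z : ℝ) - 0) ^ 2 / (2 * σ ^ 2))) = S := by
    rw [tsum_congr hw0]
  have hsum_aΔ : Summable fun z : ℤ => a (z - z₀) :=
    (Equiv.subRight z₀).summable_iff.2 hsum_a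
  set f : ℤ → ℝ := fun z => (a (z - z₀) / S) * φ (t * z) with hf_def
  set g : ℤ → ℝ := fun z => (a z / S) * φ (t * z) with hg_def
  have hsum_f : Summable f := by
    refine Summable.of_nonneg_of_le
      (fun z => mul_nonneg (div_nonneg (w_nonneg σ _) hS.le) (h0 _)) (fun z => ?_)
      (hsum_aΔ.div_const S)
    calc f z ≤ (a (z - z₀) / S) * 1 :=
          mul_le_mul_of_nonneg_left (h1 _) (div_nonneg (w_nonneg σ _) hS.le)
      _ = a (z - z₀) / S := mul_one _
  have hsum_g : Summable g := by
    refine Summable.of_nonneg_of_le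
      (fun z => mul_nonneg (div_nonneg (w_nonneg σ _) hS.le) (h0 _)) (fun z => ?_)
      (hsum_a.div_const S)
    calc g z ≤ (a z / S) * 1 :=
          mul_le_mul_of_nonneg_left (h1 _) (div_nonneg (w_nonneg σ _) hS.le)
      _ = a z / S := mul_one _
  have hQint : ∫ x, φ x ∂(latticeGauss t (σ ^ 2) Δ) = ∑' z, f z := by
    rw [latticeGauss_integral t (σ ^ 2) Δ ht (by positivity) hφ h0 h1]
    exact tsum_congr fun z => by rw [hwΔ z, hSΔ]
  have hPint : ∫ x, φ x ∂(latticeGauss t (σ ^ 2) 0) = ∑' z, g z := by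
    rw [latticeGauss_integral t (σ ^ 2) 0 ht (by positivity) hφ h0 h1]
    exact tsum_congr fun z => by rw [hw0 z, hS0]
  -- threshold set
  set A : Set ℤ := {z : ℤ | cthr < t * z} with hA_def
  set B : Set ℤ := {z : ℤ | cthr - Δ < t * z} with hB_def
  set D : ℤ → ℝ := fun z => (a (z - z₀) - k * a z) / S with hD_def
  have hconv : ∀ z : ℤ, a (z - z₀) = w σ (t * (z : ℝ) - Δ) := by
    intro z
    rw [← hwΔ z]
    unfold w
    rfl
  have hmemA : ∀ z ∈ A, k * a z ≤ a (z - z₀) := by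
    intro z hz
    rw [hconv z]
    exact threshold_ge hσ hΔ hk (le_of_lt hz)
  have hnmemA : ∀ z ∉ A, a (z - z₀) ≤ k * a z := by
    intro z hz
    rw [hconv z]
    exact threshold_le hσ hΔ hk (not_lt.1 hz)
  have hsum_D : Summable D :=
    ((hsum_aΔ.sub (hsum_a.mul_left k)).div_const S)
  -- step 2: pointwise bound
  have hptwise : ∀ z : ℤ, f z - k * g z ≤ A.indicator D z := by
    intro z
    have hfg : f z - k * g z = D z * φ (t * z) := by
      simp only [hf_def, hg_def, hD_def]
      ring
    by_cases hz : z ∈ A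
    · rw [Set.indicator_of_mem hz, hfg]
      have hDnn : 0 ≤ D z := div_nonneg (by linarith [hmemA z hz]) hS.le
      calc D z * φ (t * z) ≤ D z * 1 := mul_le_mul_of_nonneg_left (h1 _) hDnn
        _ = D z := mul_one _
    · rw [Set.indicator_of_notMem hz, hfg]
      have hDnp : D z ≤ 0 :=
        div_nonpos_of_nonpos_of_nonneg (by linarith [hnmemA z hz]) hS.le
      exact mul_nonpos_of_nonpos_of_nonneg hDnp (h0 _)
  have hstep2 : (∑' z, f z) - k * ∑' z, g z ≤ ∑' z, A.indicator D z := by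
    have hsub : (∑' z, (f z - k * g z)) = (∑' z, f z) - ∑' z, k * g z :=
      Summable.tsum_sub hsum_f (hsum_g.mul_left k)
    rw [tsum_mul_left] at hsub
    rw [← hsub]
    exact Summable.tsum_le_tsum hptwise (hsum_f.sub (hsum_g.mul_left k)) (hsum_D.indicator A)
  -- step 3: split the indicator sum
  have hstep3 : ∑' z, A.indicator D z =
      ((∑' z, A.indicator (fun z => a (z - z₀)) z) - k * ∑' z, A.indicator a z) / S := by
    have hpt : ∀ z : ℤ, A.indicator D z =
        (A.indicator (fun z => a (z - z₀)) z - k * A.indicator a z) / S := by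
      intro z
      by_cases hz : z ∈ A
      · simp only [Set.indicator_of_mem hz, hD_def]
      · simp only [Set.indicator_of_notMem hz, hD_def]
        norm_num
    rw [tsum_congr hpt]
    rw [show (fun z => (A.indicator (fun z => a (z - z₀)) z - k * A.indicator a z) / S)
        = fun z => (A.indicator (fun z => a (z - z₀)) z - k * A.indicator a z) * S⁻¹ from
      funext fun z => div_eq_mul_inv _ _]
    rw [tsum_mul_right, ← div_eq_mul_inv]
    congr 1
    rw [Summable.tsum_sub (hsum_aΔ.indicator A) ((hsum_a.indicator A).mul_left k), tsum_mul_left]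
  -- step 4: reindex
  have hstep4 : ∑' z, A.indicator (fun z => a (z - z₀)) z = ∑' z, B.indicator a z := by
    rw [← Equiv.tsum_eq (Equiv.addRight z₀) (A.indicator fun z => a (z - z₀))]
    apply tsum_congr
    intro z
    have hmem : (Equiv.addRight z₀ z) ∈ A ↔ z ∈ B := by
      simp only [hA_def, hB_def, Equiv.coe_addRight, mem_setOf_eq]
      rw [show t * ((z + z₀ : ℤ) : ℝ) = t * (z : ℝ) + Δ by push_cast; rw [hz₀]; ring]
      constructor <;> intro h <;> linarith
    by_cases hz : z ∈ B
    · rw [Set.indicator_of_mem (hmem.2 hz), Set.indicator_of_mem hz]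
      simp only [Equiv.coe_addRight, add_sub_cancel_right]
    · rw [Set.indicator_of_notMem (fun hc => hz (hmem.1 hc)), Set.indicator_of_notMem hz]
  -- step 5: sandwich upper bound for B
  have hstep5 : (∑' z, B.indicator a z) * I ≤ (∫ x in Ioi (cthr - Δ - t), w σ x) * S := by
    apply tail_sum_le ht hσ (cthr - Δ) B
    · exact fun z hz => le_of_lt hz
    · intro z hz z' hz'
      simp only [hB_def, mem_setOf_eq, not_lt] at hz hz'
      have : t * (z' : ℝ) < t * (z : ℝ) := lt_of_le_of_lt hz' hz
      exact_mod_cast le_of_lt ((mul_lt_mul_iff_right₀ ht).1 this)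
  -- step 6: lower bound for A
  have hstep6 : (∫ x in Ioi (cthr + t), w σ x) * S ≤ (∑' z, A.indicator a z) * I :=
    tail_sum_ge ht hσ cthr
  -- combine into a tail bound
  set TB : ℝ := ∫ x in Ioi (cthr - Δ - t), w σ x with hTB_def
  set TA : ℝ := ∫ x in Ioi (cthr + t), w σ x with hTA_def
  have hcomb : (∑' z, f z) - k * ∑' z, g z ≤ (TB - k * TA) / I := by
    refine (hstep2.trans_eq hstep3).trans ?_
    rw [hstep4, div_le_div_iff₀ hS hI]
    have h6' := mul_le_mul_of_nonneg_left hstep6 hk.le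
    nlinarith [hstep5, h6']
  -- hockey stick
  have hhockey : TB - k * TA ≤
      (∫ x in Ioi (ystar - s), w σ x) - k * ∫ x in Ioi ystar, w σ x := by
    have := gauss_hockey hσ hs.le ystar (cthr + t)
    rw [show cthr + t - s = cthr - Δ - t by rw [hs_def]; ring] at this
    exact this
  -- express via Phi
  have hTail1 : (∫ x in Ioi (ystar - s), w σ x) = I * (1 - Phi (xstar - s / σ)) := by
    rw [tail_w_eq_phi hσ, hI_def, total_w hσ]
    rw [show (ystar - s) / σ = xstar - s / σ by rw [hystar_def]; field_simp]
  have hTail2 : (∫ x in Ioi ystar, w σ x) = I * α := by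
    rw [tail_w_eq_phi hσ, hI_def, total_w hσ]
    rw [show ystar / σ = xstar by rw [hystar_def]; field_simp]
    rw [hPhiX]
    ring_nf
  have hGmu : Gmu ((Δ + 2 * t) / σ) α = Phi (xstar - s / σ) := by
    unfold Gmu
    rw [hxstar_def, hs_def]
  -- final chain
  have hfinal : (∑' z, f z) ≤ 1 - Phi (xstar - s / σ) := by
    have hdiv : ((∫ x in Ioi (ystar - s), w σ x) - k * ∫ x in Ioi ystar, w σ x) / I
        = (1 - Phi (xstar - s / σ)) - k * α := by
      rw [hTail1, hTail2]
      field_simp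
    have hbound : (∑' z, f z) - k * ∑' z, g z ≤ (1 - Phi (xstar - s / σ)) - k * α := by
      refine hcomb.trans ?_
      rw [← hdiv]
      exact (div_le_div_iff_of_pos_right hI).2 hhockey
    have hg_le : ∑' z, g z ≤ α := by rw [← hPint]; exact hP
    nlinarith [mul_le_mul_of_nonneg_left hg_le hk.le]
  rw [hQint, hGmu]
  linarith

end LatticeAux

open LatticeAux

/-- the trade-off function between the lattice discrete Gaussians
`N_{tℤ}(0,σ²)` and `N_{tℤ}(Δ,σ²)` is at least `G_{(Δ+2t)/σ}`. -/
theorem latticeGauss_tradeoff_bound (t σ Δ : ℝ) (ht : 0 < t)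
    (hσ : t / Real.sqrt (2 * π) < σ) (hΔ : 0 ≤ Δ) (hΔmem : ∃ z : ℤ, Δ = t * (z : ℝ)) :
    ∀ α ∈ Set.Ioo (0 : ℝ) 1,
      Gmu ((Δ + 2 * t) / σ) α ≤
        tradeOff (latticeGauss t (σ ^ 2) 0) (latticeGauss t (σ ^ 2) Δ) α := by
  intro α hα
  have hσ0 : 0 < σ :=
    lt_of_le_of_lt (div_nonneg ht.le (Real.sqrt_nonneg _)) hσ
  apply le_csInf
  · refine ⟨1 - ∫ x, (fun _ : ℝ => (0:ℝ)) x ∂(latticeGauss t (σ ^ 2) Δ),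
      fun _ => 0, measurable_const, fun x => ⟨le_refl 0, zero_le_one⟩, ?_, rfl⟩
    rw [MeasureTheory.integral_zero]
    exact hα.1.le
  · rintro β ⟨φ, hφ, hmem, hP, rfl⟩
    have h0 : ∀ x, 0 ≤ φ x := fun x => (hmem x).1
    have h1 : ∀ x, φ x ≤ 1 := fun x => (hmem x).2
    obtain ⟨z₀, hz₀⟩ := hΔmem
    rcases eq_or_lt_of_le hΔ with hΔ0 | hΔpos
    · have hQP : latticeGauss t (σ ^ 2) Δ = latticeGauss t (σ ^ 2) 0 := by rw [← hΔ0]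
      rw [hQP]
      have hm : 0 ≤ (Δ + 2 * t) / σ := by
        apply div_nonneg _ hσ0.le
        linarith
      have hPhiX : Phi (PhiInv (1 - α)) = 1 - α :=
        Phi_PhiInv (by linarith [hα.2]) (by linarith [hα.1])
      have hGmu_le : Gmu ((Δ + 2 * t) / σ) α ≤ 1 - α := by
        unfold Gmu
        calc Phi (PhiInv (1 - α) - (Δ + 2 * t) / σ) ≤ Phi (PhiInv (1 - α)) :=
              Phi_strictMono.monotone (by linarith)
          _ = 1 - α := hPhiX
      linarith
    · exact main_bound ht hσ0 hΔpos hz₀ hα hφ h0 h1 hP
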